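/- Set N := (−1, 0, 0, −1) ∈ ℝ⁴ and, for z = x + iy ∈ ℂ, E(z) := (−(x − iy), 1, −i, −(x − iy)) ∈ ℂ⁴ (so that E = ∂_z Q and N = ∂_z∂_z̄ Q). Then for every z ∈ ℂ and all u, v ∈ ℝ⁴: B(u,v) = −½[(u·Q(z))(v·N) + (v·Q(z))(u·N)] + ½[(u·E(z))·conj(v·E(z)) + (v·E(z))·conj(u·E(z))], where u·E(z) := Σ_{μ=0}^{3} uᵘ Eᵘ(z) ∈ ℂ. (This is the identity η_{μν} = −q_{(μ}∂_z∂_z̄q_{ν)} + ∂_z q_{(μ}∂_z̄ q_{ν)} used in the hard/soft decomposition of supermomenta.) -/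
import Mathlib


noncomputable section

/-- The null embedding of the celestial sphere into the light-cone of Minkowski space. -/
def Q (z : ℂ) : Fin 4 → ℝ :=
  ![-1 - z.re ^ 2 - z.im ^ 2, 2 * z.re, 2 * z.im, 1 - z.re ^ 2 - z.im ^ 2]

/-- The contraction `p·Q(z) = Σ_μ pᵘ Qᵘ(z)`. -/
def dotQ (p : Fin 4 → ℝ) (z : ℂ) : ℝ := ∑ μ : Fin 4, p μ * Q z μ

/-- The Minkowski bilinear form on `ℝ⁴`. -/
def mink (u v : Fin 4 → ℝ) : ℝ :=
  -(u 0 * v 0) + u 1 * v 1 + u 2 * v 2 + u 3 * v 3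

/-- The constant null vector `N = ∂_z∂_z̄ Q = (−1, 0, 0, −1)`. -/
def Nvec : Fin 4 → ℝ := ![-1, 0, 0, -1]

/-- The contraction `v·N = Σ_μ vᵘ Nᵘ`. -/
def dotN (v : Fin 4 → ℝ) : ℝ := ∑ μ : Fin 4, v μ * Nvec μ

/-- The polarization vector `E(z) = ∂_z Q = (−z̄, 1, −i, −z̄)`. -/
def Evec (z : ℂ) : Fin 4 → ℂ :=
  ![-(starRingEnd ℂ z), 1, -Complex.I, -(starRingEnd ℂ z)]

/-- The contraction `u·E(z) = Σ_μ uᵘ Eᵘ(z)`. -/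
def dotE (u : Fin 4 → ℝ) (z : ℂ) : ℂ := ∑ μ : Fin 4, (u μ : ℂ) * Evec z μ

/-- The identity `η_{μν} = −q_{(μ}∂_z∂_z̄q_{ν)} + ∂_z q_{(μ}∂_z̄ q_{ν)}`: for all `z`
and all `u, v ∈ ℝ⁴`,
`B(u,v) = −½[(u·Q)(v·N) + (v·Q)(u·N)] + ½[(u·E)conj(v·E) + (v·E)conj(u·E)]`. -/
theorem minkowski_metric_decomposition (z : ℂ) (u v : Fin 4 → ℝ) :
    ((mink u v : ℝ) : ℂ) =
      -(1 / 2) * (((dotQ u z : ℝ) : ℂ) * ((dotN v : ℝ) : ℂ)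
          + ((dotQ v z : ℝ) : ℂ) * ((dotN u : ℝ) : ℂ))
      + (1 / 2) * (dotE u z * starRingEnd ℂ (dotE v z)
          + dotE v z * starRingEnd ℂ (dotE u z)) := by
  simp only [mink, dotQ, dotN, dotE, Q, Nvec, Evec, Fin.sum_univ_four,
    Fin.isValue, Matrix.cons_val_zero, Matrix.cons_val_one, Matrix.head_cons,
    Matrix.cons_val_two, Matrix.tail_cons, Matrix.cons_val_three, map_mul, map_sum,
    Complex.conj_ofReal, map_neg, Complex.conj_conj, map_one,
    Complex.conj_I]
  push_cast
  rw [Complex.ext_iff]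
  constructor <;> simp [Complex.add_re, Complex.mul_re, Complex.mul_im, ← Complex.ofReal_pow] <;> ring
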